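/- Let X ⊆ ℝⁿ be a closed convex set, Y := aff(C_∞X), and T : ℝⁿ → ℝᵐ a linear map with rank(T|_Y) = m and ri(C_∞X) ∩ ker(T) ≠ ∅. Then there exists an open neighborhood N of T in L(ℝⁿ, ℝᵐ) such that for every S ∈ N, ri(C_∞X) ∩ ker(S) ≠ ∅ and S(X) is closed in ℝᵐ. -/

import Mathlib

open Metric Filter Set

/-- γ(x,R,X): sup of radii r ≥ 0 of open balls contained in B_R(x) \ X (sup ∅ = 0). -/
noncomputable def porGamma {E : Type*} [SeminormedAddCommGroup E] (x : E) (R : ℝ) (X : Set E) : ℝ :=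
  sSup {r : ℝ | 0 ≤ r ∧ ∃ x' : E, ball x' r ⊆ ball x R \ X}

/-- Porosity of X at x: liminf_{R→0⁺} γ(x,R,X)/R. -/
noncomputable def porosityAt {E : Type*} [SeminormedAddCommGroup E] (x : E) (X : Set E) : ℝ :=
  liminf (fun R => porGamma x R X / R) (nhdsWithin 0 (Ioi 0))

/-- X is porous if its porosity is positive at each of its points. -/
def IsPorous {E : Type*} [SeminormedAddCommGroup E] (X : Set E) : Prop :=
  ∀ x ∈ X, 0 < porosityAt x X

/-- X is σ-porous if it is a countable union of porous sets. -/
def IsSigmaPorous {E : Type*} [SeminormedAddCommGroup E] (X : Set E) : Prop :=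
  ∃ f : ℕ → Set E, (∀ k, IsPorous (f k)) ∧ X = ⋃ k, f k

/-- Asymptotic cone of X. -/
def asympCone {E : Type*} [SeminormedAddCommGroup E] [NormedSpace ℝ E] (X : Set E) : Set E :=
  {v | ∃ (x : ℕ → E) (t : ℕ → ℝ), (∀ k, x k ∈ X) ∧ (∀ k, 0 < t k) ∧
    Tendsto (fun k => ‖x k‖) atTop atTop ∧ Tendsto (fun k => t k • x k) atTop (nhds v)}

lemma asympCone_smul' {E : Type*} [SeminormedAddCommGroup E] [NormedSpace ℝ E] {X : Set E}
    {v : E} (hv : v ∈ asympCone X) {c : ℝ} (hc : 0 < c) : c • v ∈ asympCone X := by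
  obtain ⟨xs, ts, hxs, hts, hnorm, hlim⟩ := hv
  exact ⟨xs, fun k => c * ts k, hxs, fun k => mul_pos hc (hts k), hnorm,
    by simpa [mul_smul] using hlim.const_smul c⟩

lemma add_asympCone_mem' {E : Type*} [NormedAddCommGroup E] [NormedSpace ℝ E] {X : Set E}
    (hX : IsClosed X) (hconv : Convex ℝ X) {x v : E} (hx : x ∈ X) (hv : v ∈ asympCone X) :
    x + v ∈ X := by
  obtain ⟨xs, ts, hxs, hts, hnorm, hlim⟩ := hv
  have ht0 : Tendsto ts atTop (nhds 0) := by
    have h1 : Tendsto (fun k => ‖ts k • xs k‖ / ‖xs k‖) atTop (nhds 0) :=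
      Tendsto.div_atTop hlim.norm hnorm
    apply h1.congr'
    filter_upwards [hnorm.eventually_gt_atTop 0] with k hk
    rw [norm_smul, Real.norm_of_nonneg (hts k).le, mul_div_assoc, div_self hk.ne', mul_one]
  have hlim2 : Tendsto (fun k => (1 - ts k) • x + ts k • xs k) atTop (nhds (x + v)) := by
    have : Tendsto (fun k => (1 - ts k : ℝ)) atTop (nhds 1) := by
      simpa using (tendsto_const_nhds.sub ht0 :
        Tendsto (fun k => (1 : ℝ) - ts k) atTop (nhds (1 - 0)))
    simpa using (this.smul_const x).add hlim
  refine hX.mem_of_tendsto hlim2 ?_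
  filter_upwards [ht0.eventually (gt_mem_nhds one_pos)] with k hk
  exact hconv hx (hxs k) (by linarith [hts k]) (hts k).le (by ring)

lemma mem_intrinsicInterior_iff' {E : Type*} [NormedAddCommGroup E] [NormedSpace ℝ E]
    {s : Set E} {x : E} :
    x ∈ intrinsicInterior ℝ s ↔ x ∈ (affineSpan ℝ s : Set E) ∧
      ∃ δ > 0, ∀ y ∈ (affineSpan ℝ s : Set E), dist y x < δ → y ∈ s := by
  rw [mem_intrinsicInterior]
  constructor
  · rintro ⟨p, hp, rfl⟩
    refine ⟨p.2, ?_⟩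
    rw [mem_interior_iff_mem_nhds, Metric.mem_nhds_iff] at hp
    obtain ⟨ε, hε, hball⟩ := hp
    refine ⟨ε, hε, fun y hy hdy => ?_⟩
    have : (⟨y, hy⟩ : affineSpan ℝ s) ∈ ball p ε := by
      rw [mem_ball, Subtype.dist_eq]; exact hdy
    exact hball this
  · rintro ⟨hx, δ, hδ, h⟩
    refine ⟨⟨x, hx⟩, ?_, rfl⟩
    rw [mem_interior_iff_mem_nhds, Metric.mem_nhds_iff]
    refine ⟨δ, hδ, fun q hq => ?_⟩
    rw [mem_ball, Subtype.dist_eq] at hq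
    exact h q q.2 hq

set_option maxHeartbeats 1000000 in
/-- If X is closed convex, T|_{aff(C_∞X)} has rank m and ker T meets ri(C_∞X), then the same
holds on an open neighborhood of T, on which images of X are closed. -/
theorem ri_meets_ker_stable {n m : ℕ} (X : Set (EuclideanSpace ℝ (Fin n)))
    (hX : IsClosed X) (hconv : Convex ℝ X)
    (Y : Submodule ℝ (EuclideanSpace ℝ (Fin n)))
    (hY : (Y : Set (EuclideanSpace ℝ (Fin n))) = (affineSpan ℝ (asympCone X) : Set (EuclideanSpace ℝ (Fin n))))
    (T : EuclideanSpace ℝ (Fin n) →L[ℝ] EuclideanSpace ℝ (Fin m))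
    (hrank : Module.finrank ℝ (Y.map (T : EuclideanSpace ℝ (Fin n) →ₗ[ℝ] EuclideanSpace ℝ (Fin m))) = m)
    (hri : (intrinsicInterior ℝ (asympCone X) ∩ (LinearMap.ker (T : EuclideanSpace ℝ (Fin n) →ₗ[ℝ] EuclideanSpace ℝ (Fin m)) : Set (EuclideanSpace ℝ (Fin n)))).Nonempty) :
    ∃ N : Set (EuclideanSpace ℝ (Fin n) →L[ℝ] EuclideanSpace ℝ (Fin m)),
      IsOpen N ∧ T ∈ N ∧ ∀ S ∈ N,
        (intrinsicInterior ℝ (asympCone X) ∩ (LinearMap.ker (S : EuclideanSpace ℝ (Fin n) →ₗ[ℝ] EuclideanSpace ℝ (Fin m)) : Set (EuclideanSpace ℝ (Fin n)))).Nonempty ∧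
        IsClosed (S '' X) := by
  obtain ⟨z, hzi, hzker⟩ := hri
  have hTz : T z = 0 := by simpa using (LinearMap.mem_ker.mp hzker)
  obtain ⟨hzaff, δ, hδ, hball⟩ := mem_intrinsicInterior_iff'.mp hzi
  have hzY : z ∈ Y := by rw [← SetLike.mem_coe, hY]; exact hzaff
  have hzC : z ∈ asympCone X := hball z hzaff (by simpa using hδ)
  obtain ⟨xs0, ts0, hxs0, -, -, -⟩ := hzC
  have hx0 : xs0 0 ∈ X := hxs0 0
  -- right inverse of T restricted to Y
  have hsurj : LinearMap.range ((T : EuclideanSpace ℝ (Fin n) →ₗ[ℝ] EuclideanSpace ℝ (Fin m)) ∘ₗ Y.subtype) = ⊤ := by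
    rw [LinearMap.range_comp, Submodule.range_subtype]
    exact Submodule.eq_top_of_finrank_eq (by rw [hrank, finrank_euclideanSpace_fin])
  obtain ⟨σ, hσ⟩ := ((T : EuclideanSpace ℝ (Fin n) →ₗ[ℝ] EuclideanSpace ℝ (Fin m)) ∘ₗ
    Y.subtype).exists_rightInverse_of_surjective hsurj
  set σc : EuclideanSpace ℝ (Fin m) →L[ℝ] Y := LinearMap.toContinuousLinearMap σ with hσc
  set ι : Y →L[ℝ] EuclideanSpace ℝ (Fin n) := Y.subtypeL with hι
  set g : (EuclideanSpace ℝ (Fin n) →L[ℝ] EuclideanSpace ℝ (Fin m)) →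
      (EuclideanSpace ℝ (Fin m) →L[ℝ] EuclideanSpace ℝ (Fin m)) :=
    fun S => (S.comp ι).comp σc with hg
  have hgapp : ∀ S y, g S y = S (ι (σc y)) := fun S y => rfl
  have hgT : g T = 1 := by
    refine ContinuousLinearMap.ext fun y => ?_
    have := LinearMap.congr_fun hσ y
    simpa [hgapp, hσc, hι, ContinuousLinearMap.one_apply] using this
  have hgcont : Continuous g := by
    have h1 : Continuous fun S : EuclideanSpace ℝ (Fin n) →L[ℝ] EuclideanSpace ℝ (Fin m) =>
        S.comp ι := by
      fun_prop
    have h2 : Continuous fun A : Y →L[ℝ] EuclideanSpace ℝ (Fin m) => A.comp σc := by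
      fun_prop
    exact h2.comp h1
  set zf : (EuclideanSpace ℝ (Fin n) →L[ℝ] EuclideanSpace ℝ (Fin m)) → EuclideanSpace ℝ (Fin n) :=
    fun S => z - ι (σc (Ring.inverse (g S) (S z))) with hzf
  set U : Set (EuclideanSpace ℝ (Fin n) →L[ℝ] EuclideanSpace ℝ (Fin m)) :=
    {S | IsUnit (g S)} with hU
  have hUopen : IsOpen U := Units.isOpen.preimage hgcont
  have hinvC : ContinuousOn (fun S => Ring.inverse (g S)) U := by
    intro S hS
    obtain ⟨u, hu⟩ := hS
    have h1 : ContinuousAt Ring.inverse (g S) := by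
      rw [← hu]; exact NormedRing.inverse_continuousAt u
    exact (h1.comp hgcont.continuousAt).continuousWithinAt
  have happcont : ContinuousOn (fun S : EuclideanSpace ℝ (Fin n) →L[ℝ] EuclideanSpace ℝ (Fin m) =>
      Ring.inverse (g S) (S z)) U := by
    have hev : Continuous fun S : EuclideanSpace ℝ (Fin n) →L[ℝ] EuclideanSpace ℝ (Fin m) =>
        S z := (ContinuousLinearMap.apply ℝ (EuclideanSpace ℝ (Fin m)) z).continuous
    have hpair : ContinuousOn
        (fun S : EuclideanSpace ℝ (Fin n) →L[ℝ] EuclideanSpace ℝ (Fin m) =>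
          (Ring.inverse (g S), S z)) U := hinvC.prodMk hev.continuousOn
    exact isBoundedBilinearMap_apply.continuous.comp_continuousOn hpair
  have hzfcont : ContinuousOn zf U :=
    continuousOn_const.sub ((ι.continuous.comp σc.continuous).comp_continuousOn happcont)
  set N : Set (EuclideanSpace ℝ (Fin n) →L[ℝ] EuclideanSpace ℝ (Fin m)) :=
    U ∩ (fun S => dist (zf S) z) ⁻¹' (Iio δ) with hN
  have hNopen : IsOpen N :=
    ContinuousOn.isOpen_inter_preimage
      ((continuous_id.dist continuous_const).comp_continuousOn hzfcont) hUopen isOpen_Iio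
  have hTN : T ∈ N := by
    constructor
    · show IsUnit (g T); rw [hgT]; exact isUnit_one
    · show dist (zf T) z < δ
      have hzfT : zf T = z := by
        simp only [hzf, hgT, hTz, Ring.inverse_one, ContinuousLinearMap.one_apply,
          map_zero, sub_zero]
      rw [hzfT, dist_self]; exact hδ
  refine ⟨N, hNopen, hTN, fun S hS => ?_⟩
  obtain ⟨hSU, hSd⟩ := hS
  have hSd : dist (zf S) z < δ := hSd
  have hcancel : g S * Ring.inverse (g S) = 1 := Ring.mul_inverse_cancel _ hSU
  have hsolve : ∀ w : EuclideanSpace ℝ (Fin m), S (ι (σc (Ring.inverse (g S) w))) = w := by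
    intro w
    have h1 : g S (Ring.inverse (g S) w) = w := by
      rw [← ContinuousLinearMap.mul_apply, hcancel, ContinuousLinearMap.one_apply]
    simpa [hgapp] using h1
  have hwY : zf S ∈ Y := by
    refine Y.sub_mem hzY ?_
    show (↑(σc (Ring.inverse (g S) (S z))) : EuclideanSpace ℝ (Fin n)) ∈ Y
    exact Submodule.coe_mem _
  have hSw : S (zf S) = 0 := by
    have h1 : S (zf S) = S z - S (ι (σc (Ring.inverse (g S) (S z)))) := by
      simp only [hzf]; exact map_sub S _ _
    rw [h1, hsolve, sub_self]
  have hwaff : zf S ∈ (affineSpan ℝ (asympCone X) : Set (EuclideanSpace ℝ (Fin n))) := by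
    rw [← hY]; exact hwY
  have hwii : zf S ∈ intrinsicInterior ℝ (asympCone X) := by
    rw [mem_intrinsicInterior_iff']
    refine ⟨hwaff, δ - dist (zf S) z, by linarith, fun y hy hdy => ?_⟩
    exact hball y hy (by have := dist_triangle y (zf S) z; linarith)
  constructor
  · refine ⟨zf S, hwii, ?_⟩
    rw [SetLike.mem_coe, LinearMap.mem_ker, ContinuousLinearMap.coe_coe]
    exact hSw
  · have himg : S '' X = univ := by
      rw [eq_univ_iff_forall]
      intro y
      set u : EuclideanSpace ℝ (Fin n) := ι (σc (Ring.inverse (g S) (y - S (xs0 0)))) with hu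
      have hSu : S u = y - S (xs0 0) := hsolve _
      have huY : u ∈ Y := by
        show (↑(σc (Ring.inverse (g S) (y - S (xs0 0)))) : EuclideanSpace ℝ (Fin n)) ∈ Y
        exact Submodule.coe_mem _
      set t : ℝ := (δ - dist (zf S) z) / (‖u‖ + 1) with ht
      have hupos : (0:ℝ) < ‖u‖ + 1 := by positivity
      have htpos : 0 < t := div_pos (by linarith) hupos
      have hpY : zf S + t • u ∈ Y := Y.add_mem hwY (Y.smul_mem _ huY)
      have hpC : zf S + t • u ∈ asympCone X := by
        apply hball _ (by rw [← hY]; exact hpY)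
        have h1 : dist (zf S + t • u) (zf S) = t * ‖u‖ := by
          rw [dist_eq_norm, add_sub_cancel_left, norm_smul, Real.norm_of_nonneg htpos.le]
        have h2 : t * ‖u‖ < δ - dist (zf S) z := by
          have hlt : t * ‖u‖ < t * (‖u‖ + 1) :=
            mul_lt_mul_of_pos_left (by linarith) htpos
          have heq : t * (‖u‖ + 1) = δ - dist (zf S) z := by
            rw [ht, div_mul_cancel₀ _ hupos.ne']
          linarith
        have := dist_triangle (zf S + t • u) (zf S) z
        linarith
      have hcC : t⁻¹ • (zf S + t • u) ∈ asympCone X :=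
        asympCone_smul' hpC (inv_pos.mpr htpos)
      have hxX : xs0 0 + t⁻¹ • (zf S + t • u) ∈ X := add_asympCone_mem' hX hconv hx0 hcC
      refine ⟨xs0 0 + t⁻¹ • (zf S + t • u), hxX, ?_⟩
      rw [map_add, map_smul, map_add, hSw, map_smul, hSu, zero_add, smul_smul,
        inv_mul_cancel₀ htpos.ne', one_smul]
      abel
    rw [himg]; exact isClosed_univ
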